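/- Let λ > 0, N ∈ ℕ, and let γ : ℤ → ℝ be a sequence such that −λ ≤ (Δ^N γ)_k < λ for every k ∈ ℤ. Then for every k ∈ ℤ, (Δ^N γ)_k = M_λ((Δ^N y)_k), where y is the folded sample sequence y_k = M_λ(γ_k). In other words, the N-th finite difference of the true samples can be computed exactly from the modulo samples. -/

import Mathlib

/-- Centered modulo map `M_λ(t) = 2λ(⟨t/(2λ) + 1/2⟩ - 1/2)`. -/
noncomputable def Mlam (l t : ℝ) : ℝ := 2 * l * (Int.fract (t / (2 * l) + 1 / 2) - 1 / 2)

/-- First-order finite difference of a sequence. -/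
def fdiff (a : ℤ → ℝ) : ℤ → ℝ := fun k => a (k + 1) - a k

lemma Mlam_eq_self (l t : ℝ) (hl : 0 < l) (h1 : -l ≤ t) (h2 : t < l) :
    Mlam l t = t := by
  have h2l : (0:ℝ) < 2 * l := by linarith
  have hfr : Int.fract (t / (2 * l) + 1 / 2) = t / (2 * l) + 1 / 2 := by
    apply Int.fract_eq_self.2
    have heq : t / (2 * l) + 1 / 2 = (t + l) / (2 * l) := by field_simp
    constructor
    · rw [heq]
      exact div_nonneg (by linarith) (by positivity)
    · rw [heq]
      exact (div_lt_one h2l).2 (by linarith)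
  unfold Mlam
  rw [hfr]
  field_simp
  ring

lemma Mlam_add_int_mul (l t : ℝ) (hl : 0 < l) (n : ℤ) :
    Mlam l (t + (n : ℝ) * (2 * l)) = Mlam l t := by
  have h2l : (2 * l) ≠ 0 := by positivity
  unfold Mlam
  have : (t + (n : ℝ) * (2 * l)) / (2 * l) + 1 / 2
      = (t / (2 * l) + 1 / 2) + (n : ℝ) := by field_simp; ring
  rw [this, Int.fract_add_intCast]

lemma fdiff_sub (a b : ℤ → ℝ) : fdiff (fun k => a k - b k) = fun k => fdiff a k - fdiff b k := by
  funext k; simp [fdiff]; ring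

lemma fdiff_iter_sub (N : ℕ) (a b : ℤ → ℝ) :
    fdiff^[N] (fun k => a k - b k) = fun k => fdiff^[N] a k - fdiff^[N] b k := by
  induction N generalizing a b with
  | zero => simp
  | succ n ih =>
    rw [Function.iterate_succ_apply, fdiff_sub, ih, Function.iterate_succ_apply,
      Function.iterate_succ_apply]

lemma fdiff_iter_mem (c : ℝ) (N : ℕ) (a : ℤ → ℝ)
    (h : ∀ k, ∃ n : ℤ, a k = (n : ℝ) * c) :
    ∀ k, ∃ n : ℤ, fdiff^[N] a k = (n : ℝ) * c := by
  induction N generalizing a with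
  | zero => simpa using h
  | succ n ih =>
    rw [Function.iterate_succ_apply]
    apply ih
    intro k
    obtain ⟨m1, h1⟩ := h (k + 1)
    obtain ⟨m2, h2⟩ := h k
    exact ⟨m1 - m2, by simp [fdiff, h1, h2]; ring⟩

/-- the `N`-th finite difference of the true samples is computable
exactly from the modulo samples. -/
theorem fdiff_of_true_from_folded (l : ℝ) (hl : 0 < l) (N : ℕ) (γ : ℤ → ℝ)
    (hsmall : ∀ k : ℤ, -l ≤ (fdiff^[N] γ) k ∧ (fdiff^[N] γ) k < l)
    (y : ℤ → ℝ) (hy : ∀ k : ℤ, y k = Mlam l (γ k)) :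
    ∀ k : ℤ, (fdiff^[N] γ) k = Mlam l ((fdiff^[N] y) k) := by
  intro k
  -- γ k - y k is a multiple of 2l
  have hmul : ∀ j, ∃ n : ℤ, γ j - y j = (n : ℝ) * (2 * l) := by
    intro j
    refine ⟨⌊γ j / (2 * l) + 1 / 2⌋, ?_⟩
    rw [hy j]
    unfold Mlam
    rw [Int.fract]
    have h2l : (2 * l) ≠ 0 := by positivity
    field_simp
    ring
  have hd := fdiff_iter_mem (2 * l) N (fun j => γ j - y j) hmul k
  rw [fdiff_iter_sub] at hd
  obtain ⟨n, hn⟩ := hd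
  have hn' : fdiff^[N] γ k - fdiff^[N] y k = (n : ℝ) * (2 * l) := hn
  have hyk : fdiff^[N] y k = fdiff^[N] γ k + ((-n : ℤ) : ℝ) * (2 * l) := by
    push_cast
    linarith
  rw [hyk, Mlam_add_int_mul l _ hl, Mlam_eq_self l _ hl (hsmall k).1 (hsmall k).2]
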